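/- Let A → B be a smooth map of commutative rings, and let I ⊆ B be an ideal with I² = 0 such that A → B/I is formally smooth. Then I = 0. -/
import Mathlib

set_option linter.unusedSectionVars false


universe u

/-! Auxiliary construction: given a derivation `D : B → k` (with `k` a `B`-algebra),
we build the square-zero extension `C = B ⊕ k` with multiplication twisted by the
symmetric 2-cocycle `(b, b') ↦ D b * D b'`.  If `B` is formally smooth over `A`, the
identity of `B` lifts along `C → B`, which forces `D b₀ * D b₀ = 0` for any `b₀` with
`b₀ * b₀ = 0` mapping to `0` in `k`. -/

section SqExt

variable {A B k : Type u} [CommRing A] [CommRing B] [CommRing k]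
  [Algebra A B] [Algebra B k] [Algebra A k] [IsScalarTower A B k]

/-- Square-zero extension of `B` by `k` twisted by the cocycle `D b * D b'`. -/
@[ext]
structure SqExt (D : Derivation A B k) where
  fst : B
  snd : k

namespace SqExt

variable {D : Derivation A B k}

instance : Zero (SqExt D) := ⟨⟨0, 0⟩⟩
instance : One (SqExt D) := ⟨⟨1, 0⟩⟩
instance : Add (SqExt D) := ⟨fun p q => ⟨p.fst + q.fst, p.snd + q.snd⟩⟩
instance : Neg (SqExt D) := ⟨fun p => ⟨-p.fst, -p.snd⟩⟩
instance : Sub (SqExt D) := ⟨fun p q => ⟨p.fst - q.fst, p.snd - q.snd⟩⟩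
instance : Mul (SqExt D) :=
  ⟨fun p q => ⟨p.fst * q.fst,
    algebraMap B k p.fst * q.snd + algebraMap B k q.fst * p.snd + D p.fst * D q.fst⟩⟩

@[simp] lemma zero_fst : (0 : SqExt D).fst = 0 := rfl
@[simp] lemma zero_snd : (0 : SqExt D).snd = 0 := rfl
@[simp] lemma one_fst : (1 : SqExt D).fst = 1 := rfl
@[simp] lemma one_snd : (1 : SqExt D).snd = 0 := rfl
@[simp] lemma add_fst (p q : SqExt D) : (p + q).fst = p.fst + q.fst := rfl
@[simp] lemma add_snd (p q : SqExt D) : (p + q).snd = p.snd + q.snd := rfl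
@[simp] lemma neg_fst (p : SqExt D) : (-p).fst = -p.fst := rfl
@[simp] lemma neg_snd (p : SqExt D) : (-p).snd = -p.snd := rfl
@[simp] lemma sub_fst (p q : SqExt D) : (p - q).fst = p.fst - q.fst := rfl
@[simp] lemma sub_snd (p q : SqExt D) : (p - q).snd = p.snd - q.snd := rfl
@[simp] lemma mul_fst (p q : SqExt D) : (p * q).fst = p.fst * q.fst := rfl
@[simp] lemma mul_snd (p q : SqExt D) :
    (p * q).snd = algebraMap B k p.fst * q.snd + algebraMap B k q.fst * p.snd
      + D p.fst * D q.fst := rfl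

instance : CommRing (SqExt D) where
  add_assoc p q r := by ext <;> simp <;> ring
  zero_add p := by ext <;> simp
  add_zero p := by ext <;> simp
  add_comm p q := by ext <;> simp <;> ring
  neg_add_cancel p := by ext <;> simp
  mul_assoc p q r := by
    ext
    · simp [mul_assoc]
    · simp only [mul_fst, mul_snd, map_mul, Derivation.leibniz, Algebra.smul_def]
      ring
  one_mul p := by ext <;> simp
  mul_one p := by ext <;> simp
  mul_comm p q := by ext <;> simp <;> ring
  left_distrib p q r := by
    ext
    · simp [mul_add]
    · simp only [mul_fst, mul_snd, add_fst, add_snd, map_add, map_mul]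
      ring
  right_distrib p q r := by
    ext
    · simp [add_mul]
    · simp only [mul_fst, mul_snd, add_fst, add_snd, map_add, map_mul]
      ring
  zero_mul p := by ext <;> simp
  mul_zero p := by ext <;> simp
  nsmul := nsmulRec
  zsmul := zsmulRec
  sub := Sub.sub
  sub_eq_add_neg p q := by ext <;> simp [sub_eq_add_neg]

variable (D)

/-- The algebra map `A → SqExt D`. -/
def algRingHom : A →+* SqExt D where
  toFun a := ⟨algebraMap A B a, 0⟩
  map_one' := by ext <;> simp
  map_mul' a a' := by
    ext
    · simp
    · simp [Derivation.map_algebraMap]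
  map_zero' := by ext <;> simp
  map_add' a a' := by ext <;> simp

instance : Algebra A (SqExt D) := (algRingHom D).toAlgebra

@[simp] lemma algebraMap_fst (a : A) : (algebraMap A (SqExt D) a).fst = algebraMap A B a := rfl
@[simp] lemma algebraMap_snd (a : A) : (algebraMap A (SqExt D) a).snd = 0 := rfl

/-- The first projection, an `A`-algebra homomorphism. -/
def fstHom : SqExt D →ₐ[A] B where
  toFun := fst
  map_one' := rfl
  map_mul' _ _ := rfl
  map_zero' := rfl
  map_add' _ _ := rfl
  commutes' _ := rfl

theorem derivation_sq_zero [Algebra.FormallySmooth A B]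
    (b₀ : B) (h0 : b₀ * b₀ = 0) (h1 : algebraMap B k b₀ = 0) :
    D b₀ * D b₀ = 0 := by
  set J : Ideal (SqExt D) := RingHom.ker (fstHom D).toRingHom with hJdef
  have hmemJ : ∀ p : SqExt D, p ∈ J ↔ p.fst = 0 := fun p => Iff.rfl
  have hJ2 : J ^ 2 = ⊥ := by
    rw [pow_two, eq_bot_iff, Ideal.mul_le]
    intro r hr s hs
    rw [Ideal.mem_bot]
    ext
    · simp [(hmemJ r).mp hr, (hmemJ s).mp hs]
    · simp [(hmemJ r).mp hr, (hmemJ s).mp hs]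
  have hJn : IsNilpotent J := ⟨2, hJ2⟩
  let ι : B →ₐ[A] (SqExt D ⧸ J) :=
  { toFun := fun b => Ideal.Quotient.mk J ⟨b, 0⟩
    map_one' := rfl
    map_mul' := fun b b' => by
      rw [← map_mul, Ideal.Quotient.eq, hmemJ]
      simp
    map_zero' := rfl
    map_add' := fun b b' => by
      have he : (⟨b + b', 0⟩ : SqExt D) = ⟨b, 0⟩ + ⟨b', 0⟩ := by ext <;> simp
      show Ideal.Quotient.mk J ⟨b + b', 0⟩
          = Ideal.Quotient.mk J ⟨b, 0⟩ + Ideal.Quotient.mk J ⟨b', 0⟩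
      rw [he, map_add]
    commutes' := fun a => rfl }
  let σ : B →ₐ[A] SqExt D := Algebra.FormallySmooth.lift J hJn ι
  have hσ : ∀ b, Ideal.Quotient.mk J (σ b) = ι b := fun b =>
    Algebra.FormallySmooth.mk_lift J hJn ι b
  have hfst : ∀ b, (σ b).fst = b := by
    intro b
    have h := hσ b
    have h' : Ideal.Quotient.mk J (σ b) = Ideal.Quotient.mk J ⟨b, 0⟩ := h
    rw [Ideal.Quotient.eq, hmemJ] at h'
    simpa [sub_eq_zero] using h'
  have hmul : σ (b₀ * b₀) = σ b₀ * σ b₀ := map_mul σ b₀ b₀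
  rw [h0, map_zero] at hmul
  have := congrArg SqExt.snd hmul
  simp only [zero_snd, mul_snd, hfst, h1, zero_mul, add_zero, zero_add] at this
  exact this.symm

end SqExt

end SqExt

/-- If `A → B` is smooth, `I ⊆ B` is a square-zero ideal, and `A → B/I` is
formally smooth, then `I = 0`. -/
theorem no_square_zero_sub_formally_smooth_ideals
    (A B : Type u) [CommRing A] [CommRing B] [Algebra A B]
    [Algebra.Smooth A B] (I : Ideal B) (hI : I * I = ⊥)
    (h : Algebra.FormallySmooth A (B ⧸ I)) : I = ⊥ := by
  by_contra hne
  have hni : IsNilpotent I := ⟨2, by rwa [pow_two]⟩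
  -- a section of `B → B ⧸ I`
  let s : (B ⧸ I) →ₐ[A] B := Algebra.FormallySmooth.lift I hni (AlgHom.id A (B ⧸ I))
  have hs : ∀ y : B ⧸ I, Ideal.Quotient.mk I (s y) = y := fun y =>
    Algebra.FormallySmooth.mk_lift I hni (AlgHom.id A (B ⧸ I)) y
  let f : B →ₐ[A] B := s.comp (Ideal.Quotient.mkₐ A I)
  have hfmk : ∀ b : B, Ideal.Quotient.mk I (f b) = Ideal.Quotient.mk I b := fun b =>
    hs (Ideal.Quotient.mk I b)
  have hbf : ∀ b : B, b - f b ∈ I := by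
    intro b
    rw [← Ideal.Quotient.eq]
    exact (hfmk b).symm
  have hfI : ∀ i ∈ I, f i = 0 := by
    intro i hi
    show s (Ideal.Quotient.mkₐ A I i) = 0
    have : Ideal.Quotient.mkₐ A I i = 0 := Ideal.Quotient.eq_zero_iff_mem.mpr hi
    rw [this, map_zero]
  -- `I` is a finitely generated ideal
  have hft : Algebra.FiniteType A B := inferInstance
  obtain ⟨T, hT⟩ := hft.out
  have hspan : ∀ b : B, b - f b ∈ Ideal.span ((fun x => x - f x) '' (↑T : Set B)) := by
    intro b
    have hb : b ∈ Algebra.adjoin A (↑T : Set B) := hT.symm ▸ Algebra.mem_top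
    induction hb using Algebra.adjoin_induction with
    | mem x hx => exact Ideal.subset_span ⟨x, hx, rfl⟩
    | algebraMap r => simp [f.commutes r]
    | add x y hx hy ihx ihy =>
      have : x + y - f (x + y) = (x - f x) + (y - f y) := by rw [map_add]; ring
      rw [this]; exact Ideal.add_mem _ ihx ihy
    | mul x y hx hy ihx ihy =>
      have : x * y - f (x * y) = x * (y - f y) + f y * (x - f x) := by rw [map_mul]; ring
      rw [this]
      exact Ideal.add_mem _ (Ideal.mul_mem_left _ _ ihy) (Ideal.mul_mem_left _ _ ihx)
  have hIfg : I.FG := by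
    refine Submodule.fg_def.mpr
      ⟨(fun x => x - f x) '' (↑T : Set B), T.finite_toSet.image _, le_antisymm ?_ ?_⟩
    · rw [Submodule.span_le]
      rintro y ⟨x, _, rfl⟩
      exact hbf x
    · intro i hi
      have h2 := hspan i
      rwa [hfI i hi, sub_zero] at h2
  -- a maximal ideal `q` with `I ≠ q • I`
  have hann : I.annihilator ≠ ⊤ := fun htop =>
    hne (Submodule.annihilator_eq_top_iff.mp htop)
  obtain ⟨q, hqmax, hq⟩ := Ideal.exists_le_maximal _ hann
  have hIq : I ≤ q := by
    intro i hi
    have hii : i * i ∈ I * I := Ideal.mul_mem_mul hi hi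
    rw [hI, Ideal.mem_bot] at hii
    exact (hqmax.isPrime.mem_or_mem
      (show i * i ∈ q by rw [hii]; exact q.zero_mem)).elim id id
  have hnle : ¬ I ≤ q • (I : Submodule B B) := by
    intro hle
    obtain ⟨r, hr1, hr0⟩ :=
      Submodule.exists_sub_one_mem_and_smul_eq_zero_of_fg_of_le_smul q I hIfg hle
    have hrann : r ∈ I.annihilator := Submodule.mem_annihilator.mpr hr0
    have h1q : (1 : B) ∈ q := by
      have := q.sub_mem (hq hrann) hr1
      simpa using this
    exact hqmax.ne_top ((Ideal.eq_top_iff_one q).mpr h1q)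
  obtain ⟨i₀, hi₀I, hi₀⟩ : ∃ i₀ ∈ I, i₀ ∉ q • (I : Submodule B B) := by
    by_contra hc
    push_neg at hc
    exact hnle hc
  -- the vector space `I / qI` over `k = B ⧸ q` and a functional not vanishing on `i₀`
  letI : Field (B ⧸ q) := Ideal.Quotient.field q
  have hv : (Submodule.Quotient.mk (⟨i₀, hi₀I⟩ : ↥I) :
      (↥I) ⧸ (q • ⊤ : Submodule B ↥I)) ≠ 0 := by
    rw [Ne, Submodule.Quotient.mk_eq_zero]
    intro hmem
    apply hi₀
    have hmap : i₀ ∈ Submodule.map I.subtype (q • (⊤ : Submodule B ↥I)) :=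
      ⟨⟨i₀, hi₀I⟩, hmem, rfl⟩
    rwa [Submodule.map_smul'', Submodule.map_top, Submodule.range_subtype] at hmap
  obtain ⟨φ, hφ⟩ : ∃ φ : Module.Dual (B ⧸ q) ((↥I) ⧸ (q • ⊤ : Submodule B ↥I)),
      φ (Submodule.Quotient.mk ⟨i₀, hi₀I⟩) ≠ 0 := by
    by_contra hc
    push_neg at hc
    exact hv ((Module.forall_dual_apply_eq_zero_iff (B ⧸ q) _).mp hc)
  -- assemble the derivation `b ↦ φ (class of b - f b)`
  have lam_smul : ∀ (b : B) (u : ↥I),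
      φ (Submodule.Quotient.mk (b • u)) = Ideal.Quotient.mk q b * φ (Submodule.Quotient.mk u) := by
    intro b u
    rw [← Module.Quotient.mk_smul_mk, LinearMap.map_smul, smul_eq_mul]
  have hmkfb : ∀ b : B, Ideal.Quotient.mk q (f b) = Ideal.Quotient.mk q b := by
    intro b
    rw [Ideal.Quotient.eq]
    simpa [neg_sub] using q.neg_mem (hIq (hbf b))
  let D : Derivation A B (B ⧸ q) :=
  { toFun := fun b => φ (Submodule.Quotient.mk ⟨b - f b, hbf b⟩)
    map_add' := fun x y => by
      have he : (⟨x + y - f (x + y), hbf (x + y)⟩ : ↥I)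
          = ⟨x - f x, hbf x⟩ + ⟨y - f y, hbf y⟩ := by
        apply Subtype.ext
        show x + y - f (x + y) = (x - f x) + (y - f y)
        rw [map_add]; ring
      show φ (Submodule.Quotient.mk ⟨x + y - f (x + y), hbf (x + y)⟩)
          = φ (Submodule.Quotient.mk ⟨x - f x, hbf x⟩)
            + φ (Submodule.Quotient.mk ⟨y - f y, hbf y⟩)
      rw [he, Submodule.Quotient.mk_add, map_add]
    map_smul' := fun a b => by
      have he : (⟨a • b - f (a • b), hbf (a • b)⟩ : ↥I)
          = algebraMap A B a • ⟨b - f b, hbf b⟩ := by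
        apply Subtype.ext
        show a • b - f (a • b) = (algebraMap A B a • (⟨b - f b, hbf b⟩ : ↥I) : ↥I).1
        rw [SetLike.val_smul, Algebra.smul_def a b, smul_eq_mul, map_mul, AlgHom.commutes]
        ring
      show φ (Submodule.Quotient.mk ⟨a • b - f (a • b), hbf (a • b)⟩)
          = RingHom.id A a • φ (Submodule.Quotient.mk ⟨b - f b, hbf b⟩)
      rw [RingHom.id_apply, he, lam_smul, Algebra.smul_def,
        IsScalarTower.algebraMap_apply A B (B ⧸ q), Ideal.Quotient.algebraMap_eq]
    map_one_eq_zero' := by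
      have he : (⟨(1 : B) - f 1, hbf 1⟩ : ↥I) = 0 := by
        apply Subtype.ext
        show (1 : B) - f 1 = 0
        rw [map_one, sub_self]
      show φ (Submodule.Quotient.mk ⟨(1 : B) - f 1, hbf 1⟩) = 0
      rw [he, Submodule.Quotient.mk_zero, map_zero]
    leibniz' := fun b b' => by
      have he : (⟨b * b' - f (b * b'), hbf (b * b')⟩ : ↥I)
          = b • ⟨b' - f b', hbf b'⟩ + (f b') • ⟨b - f b, hbf b⟩ := by
        apply Subtype.ext
        show b * b' - f (b * b')
            = (b • (⟨b' - f b', hbf b'⟩ : ↥I) + (f b') • (⟨b - f b, hbf b⟩ : ↥I) : ↥I).1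
        rw [Submodule.coe_add, SetLike.val_smul, SetLike.val_smul, smul_eq_mul, smul_eq_mul,
          map_mul]
        ring
      show φ (Submodule.Quotient.mk ⟨b * b' - f (b * b'), hbf (b * b')⟩)
          = b • φ (Submodule.Quotient.mk ⟨b' - f b', hbf b'⟩)
            + b' • φ (Submodule.Quotient.mk ⟨b - f b, hbf b⟩)
      rw [he, Submodule.Quotient.mk_add, map_add, lam_smul, lam_smul, hmkfb,
        Algebra.smul_def, Algebra.smul_def, Ideal.Quotient.algebraMap_eq] }
  -- apply the auxiliary lemma
  have h0 : i₀ * i₀ = 0 := by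
    have : i₀ * i₀ ∈ I * I := Ideal.mul_mem_mul hi₀I hi₀I
    rwa [hI, Ideal.mem_bot] at this
  have h1 : algebraMap B (B ⧸ q) i₀ = 0 := by
    rw [Ideal.Quotient.algebraMap_eq, Ideal.Quotient.eq_zero_iff_mem]
    exact hIq hi₀I
  have hD := SqExt.derivation_sq_zero D i₀ h0 h1
  have hsub : (⟨i₀ - f i₀, hbf i₀⟩ : ↥I) = ⟨i₀, hi₀I⟩ :=
    Subtype.ext (by show i₀ - f i₀ = i₀; rw [hfI i₀ hi₀I, sub_zero])
  have hDi : D i₀ = φ (Submodule.Quotient.mk ⟨i₀, hi₀I⟩) := by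
    show φ (Submodule.Quotient.mk ⟨i₀ - f i₀, hbf i₀⟩) = _
    rw [hsub]
  rw [hDi] at hD
  exact hφ (mul_self_eq_zero.mp hD)
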